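/- arXiv:2208.09149 — 13 statements merged into one kernel-verified Lean document; each statement's English description precedes it below -/
import Mathlib

section
/- Let T be a bounded operator on a Hilbert space H that is generalized Drazin invertible with closed range, and let T⁻ be a fixed inner inverse of T. Then X = T^d T T⁻ satisfies: TX is idempotent, the range of TX equals the range of T T^d T, the null space of TX equals the null space of T^d T⁻, and the range of X is contained in the range of T T^d. Moreover, X is the unique operator satisfying these conditions. -/
open Filter Topology

variable {H : Type*} [NormedAddCommGroup H] [InnerProductSpace ℂ H] [CompleteSpace H]

theorem stmt0 (T Td Ti : H →L[ℂ] H)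
    (hclosed : IsClosed (Set.range T))
    (hd1 : Td * T * Td = Td) (hd2 : T * Td = Td * T)
    (hd3 : spectralRadius ℂ (T - T^2 * Td) = 0)
    (hinner : T * Ti * T = T) :
    (let X := Td * T * Ti;
      (T * X) * (T * X) = T * X ∧
      Set.range ⇑(T * X) = Set.range ⇑(T * Td * T) ∧
      LinearMap.ker ((T * X : H →L[ℂ] H) : H →ₗ[ℂ] H) = LinearMap.ker ((Td * Ti : H →L[ℂ] H) : H →ₗ[ℂ] H) ∧
      Set.range ⇑X ⊆ Set.range ⇑(T * Td)) ∧
    ∀ Y : H →L[ℂ] H,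
      ((T * Y) * (T * Y) = T * Y ∧
       Set.range ⇑(T * Y) = Set.range ⇑(T * Td * T) ∧
       LinearMap.ker ((T * Y : H →L[ℂ] H) : H →ₗ[ℂ] H) = LinearMap.ker ((Td * Ti : H →L[ℂ] H) : H →ₗ[ℂ] H) ∧
       Set.range ⇑Y ⊆ Set.range ⇑(T * Td)) → Y = Td * T * Ti := by
  have h1 : ∀ z : H →L[ℂ] H, Td * (T * (Td * z)) = Td * z := fun z => by
    rw [← mul_assoc, ← mul_assoc, hd1]
  have h2 : ∀ z : H →L[ℂ] H, T * (Ti * (T * z)) = T * z := fun z => by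
    rw [← mul_assoc, ← mul_assoc, hinner]
  have hinner' : T * (Ti * T) = T := by rw [← mul_assoc, hinner]
  have hd1' : Td * (T * Td) = Td := by rw [← mul_assoc, hd1]
  have hcomm : ∀ z : H →L[ℂ] H, Td * (T * z) = T * (Td * z) := fun z => by
    rw [← mul_assoc, ← hd2, mul_assoc]
  have hTd2T : ∀ z : H →L[ℂ] H, Td * (Td * (T * z)) = Td * z := fun z => by
    rw [← mul_assoc Td T z, ← hd2, ← mul_assoc, hd1']
  have hTdd : ∀ z : H →L[ℂ] H, T * (Td * (Td * z)) = Td * z := fun z => by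
    rw [← mul_assoc, ← mul_assoc, hd2, hd1]
  have hsub : ∀ f g : H →L[ℂ] H, Set.range ⇑(f * g) ⊆ Set.range ⇑f := by
    rintro f g _ ⟨x, rfl⟩
    exact ⟨g x, (ContinuousLinearMap.mul_apply f g x).symm⟩
  have hidem : (T * (Td * T * Ti)) * (T * (Td * T * Ti)) = T * (Td * T * Ti) := by
    simp only [mul_assoc, h1, h2]
  have hrange : Set.range ⇑(T * (Td * T * Ti)) = Set.range ⇑(T * Td * T) := by
    apply Set.Subset.antisymm
    · rw [show T * (Td * T * Ti) = (T * Td * T) * Ti by simp only [mul_assoc]]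
      exact hsub _ _
    · rw [show T * Td * T = (T * (Td * T * Ti)) * T by simp only [mul_assoc, hinner']]
      exact hsub _ _
  have hF : T * (Td * T * Ti) = (T * T) * (Td * Ti) := by
    simp only [mul_assoc, hcomm]
  have hG : Td * Ti = (Td * Td) * (T * (Td * T * Ti)) := by
    simp only [mul_assoc, h1, hTd2T, hcomm, hTdd]
  have hker : LinearMap.ker ((T * (Td * T * Ti) : H →L[ℂ] H) : H →ₗ[ℂ] H) = LinearMap.ker ((Td * Ti : H →L[ℂ] H) : H →ₗ[ℂ] H) := by
    ext x
    simp only [LinearMap.mem_ker, ContinuousLinearMap.coe_coe]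
    constructor
    · intro h
      rw [hG, ContinuousLinearMap.mul_apply, h, map_zero]
    · intro h
      rw [hF, ContinuousLinearMap.mul_apply, h, map_zero]
  have hXr : Set.range ⇑(Td * T * Ti) ⊆ Set.range ⇑(T * Td) := by
    rw [show Td * T * Ti = (T * Td) * (Td * T * Ti) by
      simp only [mul_assoc, hcomm, hTd2T, hTdd, h1]]
    exact hsub _ _
  refine ⟨⟨hidem, hrange, hker, hXr⟩, ?_⟩
  rintro Y ⟨hY1, hY2, hY3, hY4⟩
  have hTYX : T * Y = T * (Td * T * Ti) := by
    ext x
    have hrQ : Set.range ⇑(T * Y) = Set.range ⇑(T * (Td * T * Ti)) := by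
      rw [hY2]; exact hrange.symm
    have hkQ : LinearMap.ker ((T * Y : H →L[ℂ] H) : H →ₗ[ℂ] H) = LinearMap.ker ((T * (Td * T * Ti) : H →L[ℂ] H) : H →ₗ[ℂ] H) := by
      rw [hY3]; exact hker.symm
    have hm : (T * Y) x ∈ Set.range ⇑(T * (Td * T * Ti)) := hrQ ▸ ⟨x, rfl⟩
    obtain ⟨z, hz⟩ := hm
    have hPfix : (T * (Td * T * Ti)) ((T * Y) x) = (T * Y) x := by
      rw [← hz, ← ContinuousLinearMap.mul_apply, hidem]
    have hQQ : (T * Y) ((T * Y) x) = (T * Y) x := by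
      rw [← ContinuousLinearMap.mul_apply, hY1]
    have hkmem : x - (T * Y) x ∈ LinearMap.ker ((T * Y : H →L[ℂ] H) : H →ₗ[ℂ] H) := by
      simp only [LinearMap.mem_ker, ContinuousLinearMap.coe_coe, map_sub, hQQ, sub_self]
    have hP0 : (T * (Td * T * Ti)) (x - (T * Y) x) = 0 := by
      have h := hkQ ▸ hkmem
      simpa only [LinearMap.mem_ker, ContinuousLinearMap.coe_coe] using h
    have hsum : (T * (Td * T * Ti)) x
        = (T * (Td * T * Ti)) ((T * Y) x) + (T * (Td * T * Ti)) (x - (T * Y) x) := by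
      rw [← map_add]; congr 1; abel
    have hPx : (T * (Td * T * Ti)) x = (T * Y) x := by
      rw [hsum, hPfix, hP0, add_zero]
    exact hPx.symm
  ext x
  have hYmem : Y x ∈ Set.range ⇑(T * Td) := hY4 ⟨x, rfl⟩
  obtain ⟨z, hz⟩ := hYmem
  have hTdTidem : (T * Td) * (T * Td) = T * Td := by simp only [mul_assoc, hd1']
  have hfix : (T * Td) (Y x) = Y x := by
    rw [← hz, ← ContinuousLinearMap.mul_apply, hTdTidem]
  calc Y x = (T * Td) (Y x) := hfix.symm
    _ = (Td * T) (Y x) := by rw [hd2]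
    _ = Td ((T * Y) x) := rfl
    _ = Td ((T * (Td * T * Ti)) x) := by rw [hTYX]
    _ = (Td * (T * (Td * T * Ti))) x := rfl
    _ = (Td * T * Ti) x := by
        rw [show Td * (T * (Td * T * Ti)) = Td * T * Ti by simp only [mul_assoc, h1]]
end

section
/- Let T be a bounded operator on a Hilbert space H that is generalized Drazin invertible with closed range, and let T⁻ be an inner inverse of T. Then X = T^d T T⁻ is the unique solution of the system of operator equations: X T X = X, T^d X = T^d T⁻, and X T = T^d T. -/
open Filter Topology

variable {H : Type*} [NormedAddCommGroup H] [InnerProductSpace ℂ H] [CompleteSpace H]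

theorem stmt1 (T Td Ti : H →L[ℂ] H)
    (hclosed : IsClosed (Set.range T))
    (hd1 : Td * T * Td = Td) (hd2 : T * Td = Td * T)
    (hd3 : spectralRadius ℂ (T - T^2 * Td) = 0)
    (hinner : T * Ti * T = T) :
    (let X := Td * T * Ti;
      X * T * X = X ∧ Td * X = Td * Ti ∧ X * T = Td * T) ∧
    ∀ Y : H →L[ℂ] H,
      (Y * T * Y = Y ∧ Td * Y = Td * Ti ∧ Y * T = Td * T) → Y = Td * T * Ti := by
  have hTiT : Td * T * Ti * T = Td * T := by
    have : Td * T * Ti * T = Td * (T * Ti * T) := by noncomm_ring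
    rw [this, hinner]
  refine ⟨⟨?_, ?_, hTiT⟩, ?_⟩
  · have e1 : Td * T * Ti * T * (Td * T * Ti) = Td * T * Ti * T * Td * (T * Ti) := by
      noncomm_ring
    have e2 : Td * T * Td * (T * Ti) = Td * T * Ti := by
      rw [hd1]; noncomm_ring
    rw [e1, hTiT, e2]
  · have e1 : Td * (Td * T * Ti) = Td * (T * Td) * Ti := by rw [hd2]; noncomm_ring
    have e2 : Td * (T * Td) * Ti = Td * T * Td * Ti := by noncomm_ring
    rw [e1, e2, hd1]
  · rintro Y ⟨h1, h2, h3⟩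
    have e1 : Y = Td * T * Y := by rw [← h3, h1]
    have e2 : Td * T * Y = T * (Td * Y) := by rw [← hd2]; noncomm_ring
    have e3 : T * (Td * Ti) = Td * T * Ti := by
      have : T * (Td * Ti) = T * Td * Ti := by noncomm_ring
      rw [this, hd2]
    rw [e1, e2, h2, e3]
end

section
/- Let T be a bounded operator on a Hilbert space H that is generalized Drazin invertible with closed range, with GD1 inverse T^{GD-} = T^d T T⁻ for a fixed inner inverse T⁻. Then T T^{GD-} = T^{GD-} T if and only if T^{GD-} = T^d. -/
open Filter Topology

variable {H : Type*} [NormedAddCommGroup H] [InnerProductSpace ℂ H] [CompleteSpace H]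

theorem stmt2 (T Td Ti : H →L[ℂ] H)
    (hclosed : IsClosed (Set.range T))
    (hd1 : Td * T * Td = Td) (hd2 : T * Td = Td * T)
    (hd3 : spectralRadius ℂ (T - T^2 * Td) = 0)
    (hinner : T * Ti * T = T) :
    T * (Td * T * Ti) = (Td * T * Ti) * T ↔ Td * T * Ti = Td := by
  have hi' : T * (Ti * T) = T := by rw [← mul_assoc, hinner]
  constructor
  · intro h
    simp only [mul_assoc] at h ⊢
    rw [hi'] at h
    have h2 := congrArg (fun X => Td * X) h
    calc Td * (T * Ti) = (Td * (T * Td)) * (T * Ti) := by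
          rw [show Td * (T * Td) = Td from by rw [← mul_assoc]; exact hd1]
      _ = Td * (T * (Td * (T * Ti))) := by simp only [mul_assoc]
      _ = Td * (Td * T) := h2
      _ = Td * (T * Td) := by rw [hd2]
      _ = Td := by rw [← mul_assoc]; exact hd1
  · intro h
    rw [h, hd2]
end

section
/- Let T be a bounded operator on a Hilbert space H that is generalized Drazin invertible with closed range, with GD1 inverse T^{GD-} = T^d T T⁻. Then T^{GD-} is idempotent if and only if T^{GD-} = T^d T⁻, and this holds if and only if T^{GD-} = T T^{GD-}. -/
open Filter Topology

variable {H : Type*} [NormedAddCommGroup H] [InnerProductSpace ℂ H] [CompleteSpace H]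

theorem stmt4 (T Td Ti : H →L[ℂ] H)
    (hclosed : IsClosed (Set.range T))
    (hd1 : Td * T * Td = Td) (hd2 : T * Td = Td * T)
    (hd3 : spectralRadius ℂ (T - T^2 * Td) = 0)
    (hinner : T * Ti * T = T) :
    ((Td * T * Ti) * (Td * T * Ti) = Td * T * Ti ↔ Td * T * Ti = Td * Ti) ∧
    ((Td * T * Ti) * (Td * T * Ti) = Td * T * Ti ↔ Td * T * Ti = T * (Td * T * Ti)) := by
  have key : (Td * T * Ti) * (Td * T * Ti) = Td * Ti := by
    calc (Td * T * Ti) * (Td * T * Ti)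
        = Td * T * (Ti * (Td * T)) * Ti := by noncomm_ring
      _ = Td * T * (Ti * (T * Td)) * Ti := by rw [hd2]
      _ = Td * (T * Ti * T) * Td * Ti := by noncomm_ring
      _ = Td * T * Td * Ti := by rw [hinner]
      _ = Td * Ti := by rw [hd1]
  have key2 : Td * Td * T = Td := by
    calc Td * Td * T = Td * (T * Td) := by rw [hd2]; noncomm_ring
      _ = Td := by rw [← mul_assoc, hd1]
  constructor
  · rw [key]
    exact ⟨fun h => h.symm, fun h => h.symm⟩
  · rw [key]
    constructor
    · intro h
      calc Td * T * Ti = T * (Td * Ti) := by rw [← mul_assoc, hd2]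
        _ = T * (Td * T * Ti) := by rw [h]
    · intro h
      have h2 : Td * (T * (Td * T * Ti)) = Td * T * Ti := by
        calc Td * (T * (Td * T * Ti)) = Td * T * Td * (T * Ti) := by noncomm_ring
          _ = Td * T * Ti := by rw [hd1, mul_assoc]
      calc Td * Ti = Td * Td * T * Ti := by rw [key2]
        _ = Td * (Td * T * Ti) := by noncomm_ring
        _ = Td * (T * (Td * T * Ti)) := by rw [← h]
        _ = Td * T * Ti := h2
end

section
/- Let T be a bounded operator on a Hilbert space H that is generalized Drazin invertible with closed range, with GD1 inverse T^{GD-} = T^d T T⁻. Then T T^{GD-} = T T⁻ if and only if T T^d T = T. -/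
open Filter Topology

variable {H : Type*} [NormedAddCommGroup H] [InnerProductSpace ℂ H] [CompleteSpace H]

theorem stmt5 (T Td Ti : H →L[ℂ] H)
    (hclosed : IsClosed (Set.range T))
    (hd1 : Td * T * Td = Td) (hd2 : T * Td = Td * T)
    (hd3 : spectralRadius ℂ (T - T^2 * Td) = 0)
    (hinner : T * Ti * T = T) :
    T * (Td * T * Ti) = T * Ti ↔ T * Td * T = T := by
  constructor
  · intro h
    have h' := congrArg (· * T) h
    simp only [mul_assoc] at h' hinner ⊢
    rw [hinner] at h'
    exact h'
  · intro h
    simp only [mul_assoc] at h ⊢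
    rw [← mul_assoc Td T Ti, ← mul_assoc T, h]
end

section
/- Let T be a bounded operator on a Hilbert space H that is generalized Drazin invertible with closed range, with GD1 inverse T^{GD-} = T^d T T⁻. Then T^{GD-} is idempotent if and only if T^{GD-} = T^n (T^{GD-})^m for all n ∈ ℕ ∪ {0} and all m ∈ ℕ with m ≥ 1. -/
open Filter Topology

variable {H : Type*} [NormedAddCommGroup H] [InnerProductSpace ℂ H] [CompleteSpace H]

theorem stmt8 (T Td Ti : H →L[ℂ] H)
    (hclosed : IsClosed (Set.range T))
    (hd1 : Td * T * Td = Td) (hd2 : T * Td = Td * T)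
    (hd3 : spectralRadius ℂ (T - T^2 * Td) = 0)
    (hinner : T * Ti * T = T) :
    (Td * T * Ti) * (Td * T * Ti) = Td * T * Ti ↔
      ∀ (n : ℕ) (m : ℕ), 1 ≤ m → Td * T * Ti = T ^ n * (Td * T * Ti) ^ m := by
  have hPT : (Td * T * Ti) * T = Td * T := by
    calc (Td * T * Ti) * T = Td * (T * Ti * T) := by noncomm_ring
    _ = Td * T := by rw [hinner]
  have hPQ : (Td * T * Ti) * (Td * T) = Td := by
    calc (Td * T * Ti) * (Td * T) = (Td * T * Ti) * (T * Td) := by rw [hd2]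
    _ = Td * (T * Ti * T) * Td := by noncomm_ring
    _ = Td * T * Td := by rw [hinner]
    _ = Td := hd1
  constructor
  · intro h
    have hq : Td * T = Td := by
      calc Td * T = (Td * T * Ti) * T := hPT.symm
      _ = ((Td * T * Ti) * (Td * T * Ti)) * T := by rw [h]
      _ = (Td * T * Ti) * ((Td * T * Ti) * T) := by noncomm_ring
      _ = (Td * T * Ti) * (Td * T) := by rw [hPT]
      _ = Td := hPQ
    have hTP : T * (Td * T * Ti) = Td * T * Ti := by
      calc T * (Td * T * Ti) = (T * Td) * (T * Ti) := by noncomm_ring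
      _ = (Td * T) * (T * Ti) := by rw [hd2]
      _ = Td * (T * Ti) := by rw [hq]
      _ = Td * T * Ti := (mul_assoc _ _ _).symm
    have hTn : ∀ k : ℕ, T ^ k * (Td * T * Ti) = Td * T * Ti := by
      intro k
      induction k with
      | zero => rw [pow_zero, one_mul]
      | succ k ih =>
        calc T ^ (k + 1) * (Td * T * Ti) = T ^ k * (T * (Td * T * Ti)) := by
              rw [pow_succ, mul_assoc]
        _ = T ^ k * (Td * T * Ti) := by rw [hTP]
        _ = Td * T * Ti := ih
    have hPm : ∀ k : ℕ, 1 ≤ k → (Td * T * Ti) ^ k = Td * T * Ti := by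
      intro k hk
      induction k with
      | zero => omega
      | succ k ih =>
        rcases Nat.eq_or_lt_of_le hk with h1 | h1
        · rw [← h1, pow_one]
        · have hk1 : 1 ≤ k := by omega
          rw [pow_succ, ih hk1, h]
    intro n m hm
    rw [hPm m hm, hTn n]
  · intro h
    have h2 := h 0 2 one_le_two
    rw [pow_zero, one_mul, sq] at h2
    exact h2.symm
end

section
/- Let T be a bounded operator on a Hilbert space H that is generalized Drazin invertible with closed range, and let X ∈ B(H) satisfy X T X = X and X T = T^d T. Then T²(X − T⁻) is quasinilpotent for any inner inverse T⁻ of T. In particular, (T^d T − I) T² T⁻ is quasinilpotent. -/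
open Filter Topology

lemma sr_zero_iff {A : Type*} [NormedRing A] [NormedAlgebra ℂ A] (a : A) :
    spectralRadius ℂ a = 0 ↔ spectrum ℂ a ⊆ {0} := by
  rw [spectralRadius, show (0:ENNReal) = ⊥ from rfl, iSup₂_eq_bot]
  simp [Set.subset_def]

lemma sr_swap {A : Type*} [NormedRing A] [NormedAlgebra ℂ A] (a b : A)
    (h : spectralRadius ℂ (a * b) = 0) : spectralRadius ℂ (b * a) = 0 := by
  rw [sr_zero_iff] at h ⊢
  intro z hz
  by_contra hz0
  have : z ∈ spectrum ℂ (b * a) \ {0} := ⟨hz, hz0⟩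
  rw [← spectrum.nonzero_mul_comm] at this
  exact this.2 (h this.1)

lemma sr_neg {A : Type*} [NormedRing A] [NormedAlgebra ℂ A] (a : A)
    (h : spectralRadius ℂ a = 0) : spectralRadius ℂ (-a) = 0 := by
  rw [sr_zero_iff] at h ⊢
  intro z hz
  rw [← spectrum.neg_eq, Set.mem_neg] at hz
  have := h hz
  simp_all [neg_eq_zero]

variable {H : Type*} [NormedAddCommGroup H] [InnerProductSpace ℂ H] [CompleteSpace H]

lemma key (T Td Ti X : H →L[ℂ] H)
    (hd2 : T * Td = Td * T)
    (hd3 : spectralRadius ℂ (T - T^2 * Td) = 0)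
    (hinner : T * Ti * T = T)
    (hX2 : X * T = Td * T) :
    spectralRadius ℂ (T ^ 2 * (X - Ti)) = 0 := by
  have h1 : T ^ 2 * (X - Ti) = T * (T * (X - Ti)) := by noncomm_ring
  rw [h1]
  apply sr_swap
  have h2 : (T * (X - Ti)) * T = -(T - T^2 * Td) := by
    have : T * (X * T) - T * Ti * T = -(T - T ^ 2 * Td) := by
      have h3 : T ^ 2 * Td = T * (Td * T) := by rw [← hd2]; noncomm_ring
      rw [hX2, hinner, h3]
      noncomm_ring
    calc (T * (X - Ti)) * T = T * (X * T) - T * Ti * T := by noncomm_ring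
    _ = -(T - T ^ 2 * Td) := this
  rw [h2]
  exact sr_neg _ hd3

theorem stmt10 (T Td Ti X : H →L[ℂ] H)
    (hclosed : IsClosed (Set.range T))
    (hd1 : Td * T * Td = Td) (hd2 : T * Td = Td * T)
    (hd3 : spectralRadius ℂ (T - T^2 * Td) = 0)
    (hinner : T * Ti * T = T)
    (hX1 : X * T * X = X) (hX2 : X * T = Td * T) :
    spectralRadius ℂ (T ^ 2 * (X - Ti)) = 0 ∧
    spectralRadius ℂ ((Td * T - 1) * (T ^ 2 * Ti)) = 0 := by
  refine ⟨key T Td Ti X hd2 hd3 hinner hX2, ?_⟩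
  have hX2' : (Td * T * Ti) * T = Td * T := by
    rw [mul_assoc, mul_assoc, ← mul_assoc T Ti T, hinner]
  have heq : (Td * T - 1) * (T ^ 2 * Ti) = T ^ 2 * (Td * T * Ti - Ti) := by
    have hcomm : Commute Td (T ^ 2) := (Commute.symm hd2).pow_right 2
    have : Td * T * T ^ 2 = T ^ 2 * (Td * T) := by
      calc Td * T * T ^ 2 = Td * T ^ 2 * T := by noncomm_ring
      _ = T ^ 2 * Td * T := by rw [hcomm.eq]
      _ = T ^ 2 * (Td * T) := by noncomm_ring
    calc (Td * T - 1) * (T ^ 2 * Ti) = (Td * T * T ^ 2) * Ti - T ^ 2 * Ti := by noncomm_ring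
    _ = (T ^ 2 * (Td * T)) * Ti - T ^ 2 * Ti := by rw [this]
    _ = T ^ 2 * (Td * T * Ti - Ti) := by noncomm_ring
  rw [heq]
  exact key T Td Ti _ hd2 hd3 hinner hX2'
end

section
/- Let T be a bounded operator on a Hilbert space H that is generalized Drazin invertible with closed range, and T⁻ an inner inverse of T. Then the operator T² T⁻ is generalized Drazin invertible and its generalized Drazin inverse equals the GD1 inverse of T, i.e., (T² T⁻)^d = T^d T T⁻. -/
open Filter Topology
open scoped ENNReal

variable {H : Type*} [NormedAddCommGroup H] [InnerProductSpace ℂ H] [CompleteSpace H]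

theorem stmt11 (T Td Ti : H →L[ℂ] H)
    (hclosed : IsClosed (Set.range T))
    (hd1 : Td * T * Td = Td) (hd2 : T * Td = Td * T)
    (hd3 : spectralRadius ℂ (T - T^2 * Td) = 0)
    (hinner : T * Ti * T = T) :
    (Td * T * Ti) * (T ^ 2 * Ti) * (Td * T * Ti) = Td * T * Ti ∧
    (T ^ 2 * Ti) * (Td * T * Ti) = (Td * T * Ti) * (T ^ 2 * Ti) ∧
    spectralRadius ℂ (T ^ 2 * Ti - (T ^ 2 * Ti) ^ 2 * (Td * T * Ti)) = 0 := by
  have h1 : ∀ x : H →L[ℂ] H, T * (Ti * (T * x)) = T * x := fun x => by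
    rw [← mul_assoc, ← mul_assoc, hinner]
  have h1' : T * (Ti * T) = T := by rw [← mul_assoc, hinner]
  have h2 : ∀ x : H →L[ℂ] H, Td * (T * x) = T * (Td * x) := fun x => by
    rw [← mul_assoc, ← mul_assoc, hd2]
  have h2' : Td * T = T * Td := hd2.symm
  have h3 : ∀ x : H →L[ℂ] H, T * (Td * (Td * x)) = Td * x := fun x => by
    rw [← mul_assoc, ← mul_assoc, hd2, hd1]
  have h3' : T * (Td * Td) = Td := by rw [← mul_assoc, hd2, hd1]
  set Q : H →L[ℂ] H := T - T ^ 2 * Td with hQ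
  set b : H →L[ℂ] H := T * Ti with hb
  refine ⟨?_, ?_, ?_⟩
  · simp only [pow_two, mul_assoc]
    simp only [h1, h2, h2', h3, h3', h1']
  · simp only [pow_two, mul_assoc]
    simp only [h1, h2, h2', h3, h3', h1']
  · have heq : T ^ 2 * Ti - (T ^ 2 * Ti) ^ 2 * (Td * T * Ti) = Q * b := by
      simp only [hQ, hb, pow_two, mul_assoc, mul_sub, sub_mul]
      simp only [h1, h2, h2', h3, h3', h1']
    rw [heq]
    have hba : b * (Q * b) = Q * b := by
      simp only [hQ, hb, pow_two, mul_assoc, mul_sub, sub_mul]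
      simp only [h1, h2, h2', h3, h3', h1']
    have hpow : ∀ n : ℕ, (Q * b) ^ (n + 1) = Q ^ (n + 1) * b := by
      intro n
      induction n with
      | zero => simp [pow_one]
      | succ m ih =>
        rw [pow_succ, ih, mul_assoc, hba, ← mul_assoc, ← pow_succ]
    -- Gelfand: the sequence for Q * b tends to 0
    have hQlim := spectrum.pow_nnnorm_pow_one_div_tendsto_nhds_spectralRadius Q
    rw [hd3] at hQlim
    have h2top : (2 : ℝ≥0∞) ≠ ⊤ := by norm_num
    have hupper : Tendsto (fun n : ℕ => (‖Q ^ n‖₊ : ℝ≥0∞) ^ (1 / (n : ℝ)) * 2)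
        atTop (𝓝 0) := by
      have := ENNReal.Tendsto.mul_const hQlim (Or.inr h2top)
      simpa using this
    have hev : ∀ᶠ n : ℕ in atTop,
        (‖(Q * b) ^ n‖₊ : ℝ≥0∞) ^ (1 / (n : ℝ)) ≤ (‖Q ^ n‖₊ : ℝ≥0∞) ^ (1 / (n : ℝ)) * 2 := by
      have hb2 : ∀ᶠ n : ℕ in atTop, (‖b‖₊ : ℝ≥0∞) ^ (1 / (n : ℝ)) ≤ 2 :=
        ENNReal.eventually_pow_one_div_le ENNReal.coe_ne_top (by norm_num : (1:ℝ≥0∞) < 2)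
      filter_upwards [hb2, eventually_ge_atTop 1] with n hbn hn
      obtain ⟨m, rfl⟩ : ∃ m, n = m + 1 := ⟨n - 1, by omega⟩
      have hnorm : (‖(Q * b) ^ (m + 1)‖₊ : ℝ≥0∞) ≤ (‖Q ^ (m + 1)‖₊ : ℝ≥0∞) * ‖b‖₊ := by
        rw [hpow m]
        exact_mod_cast nnnorm_mul_le _ _
      calc (‖(Q * b) ^ (m + 1)‖₊ : ℝ≥0∞) ^ (1 / ((m + 1 : ℕ) : ℝ))
          ≤ ((‖Q ^ (m + 1)‖₊ : ℝ≥0∞) * ‖b‖₊) ^ (1 / ((m + 1 : ℕ) : ℝ)) :=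
            ENNReal.rpow_le_rpow hnorm (by positivity)
        _ = (‖Q ^ (m + 1)‖₊ : ℝ≥0∞) ^ (1 / ((m + 1 : ℕ) : ℝ)) *
              (‖b‖₊ : ℝ≥0∞) ^ (1 / ((m + 1 : ℕ) : ℝ)) :=
            ENNReal.mul_rpow_of_nonneg _ _ (by positivity)
        _ ≤ (‖Q ^ (m + 1)‖₊ : ℝ≥0∞) ^ (1 / ((m + 1 : ℕ) : ℝ)) * 2 :=
            mul_le_mul' le_rfl hbn
    have hzero : Tendsto (fun n : ℕ => (‖(Q * b) ^ n‖₊ : ℝ≥0∞) ^ (1 / (n : ℝ)))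
        atTop (𝓝 0) :=
      tendsto_of_tendsto_of_tendsto_of_le_of_le' tendsto_const_nhds hupper
        (Eventually.of_forall fun n => zero_le) hev
    exact tendsto_nhds_unique
      (spectrum.pow_nnnorm_pow_one_div_tendsto_nhds_spectralRadius (Q * b)) hzero
end

section
/- Let T be a bounded operator on a Hilbert space H that is generalized Drazin invertible with closed range, and T⁻ an inner inverse of T. Then lim_{n→∞} (T⁻ T^{n+1} T^d − T^{n+1} T^d T⁻) = 0 (in operator norm) if and only if both lim_{n→∞} (T⁻ T^{n+2} T^d − T^{n+1} T^d) = 0 and lim_{n→∞} (T^{n+2} T^d T⁻ − T^{n+1} T^d) = 0. -/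
open Filter Topology

variable {H : Type*} [NormedAddCommGroup H] [InnerProductSpace ℂ H] [CompleteSpace H]

theorem stmt12 (T Td Ti : H →L[ℂ] H)
    (hclosed : IsClosed (Set.range T))
    (hd1 : Td * T * Td = Td) (hd2 : T * Td = Td * T)
    (hd3 : spectralRadius ℂ (T - T^2 * Td) = 0)
    (hinner : T * Ti * T = T) :
    Tendsto (fun n : ℕ => Ti * T ^ (n + 1) * Td - T ^ (n + 1) * Td * Ti) atTop (𝓝 0) ↔
      (Tendsto (fun n : ℕ => Ti * T ^ (n + 2) * Td - T ^ (n + 1) * Td) atTop (𝓝 0) ∧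
       Tendsto (fun n : ℕ => T ^ (n + 2) * Td * Ti - T ^ (n + 1) * Td) atTop (𝓝 0)) := by
  set A : ℕ → (H →L[ℂ] H) := fun n => Ti * T ^ (n + 1) * Td - T ^ (n + 1) * Td * Ti with hA
  set B : ℕ → (H →L[ℂ] H) := fun n => Ti * T ^ (n + 2) * Td - T ^ (n + 1) * Td with hB
  set C : ℕ → (H →L[ℂ] H) := fun n => T ^ (n + 2) * Td * Ti - T ^ (n + 1) * Td with hC
  -- basic identities
  have h1 : ∀ n : ℕ, Ti * T ^ (n + 1) * Td * T = Ti * T ^ (n + 2) * Td := by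
    intro n
    have : T ^ (n + 1) * Td * T = T ^ (n + 2) * Td := by
      rw [mul_assoc, ← hd2, ← mul_assoc, ← pow_succ]
    rw [mul_assoc, mul_assoc, ← mul_assoc (T ^ (n+1)), this, ← mul_assoc]
  have h2 : ∀ n : ℕ, T ^ (n + 1) * Td * Ti * T = T ^ (n + 1) * Td := by
    intro n
    have e1 : T ^ (n + 1) * Td = T ^ n * Td * T := by
      rw [pow_succ, mul_assoc, hd2, ← mul_assoc]
    rw [e1, mul_assoc, mul_assoc, mul_assoc, ← mul_assoc T Ti T, hinner, ← mul_assoc]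
  have h3 : ∀ n : ℕ, T * (Ti * (T ^ (n + 1) * Td)) = T ^ (n + 1) * Td := by
    intro n
    have e1 : T ^ (n + 1) = T * T ^ n := by rw [pow_succ']
    rw [e1, ← mul_assoc, ← mul_assoc, ← mul_assoc, hinner, mul_assoc]
  -- A (n+1) = B n - C n
  have key1 : ∀ n : ℕ, A (n + 1) = B n - C n := by
    intro n
    simp only [hA, hB, hC]
    abel
  -- B n + C n = A n * T - T * A n
  have key2 : ∀ n : ℕ, B n + C n = A n * T - T * A n := by
    intro n
    simp only [hA, hB, hC, sub_mul, mul_sub, h1 n, h2 n]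
    rw [← mul_assoc T (Ti * T^(n+1)) Td, ← mul_assoc T Ti (T^(n+1)), mul_assoc (T * Ti) _ Td,
      mul_assoc T Ti _, h3 n]
    have : T * (T ^ (n + 1) * Td * Ti) = T ^ (n + 2) * Td * Ti := by
      rw [← mul_assoc, ← mul_assoc, ← pow_succ']
    rw [this]
    abel
  constructor
  · intro hAt
    have hAs : Tendsto (fun n => A (n + 1)) atTop (𝓝 0) :=
      (tendsto_add_atTop_iff_nat 1).mpr hAt
    have hBC : Tendsto (fun n => B n + C n) atTop (𝓝 0) := by
      have h := (hAt.mul (tendsto_const_nhds (x := T))).sub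
        ((tendsto_const_nhds (x := T)).mul hAt)
      simp only [zero_mul, mul_zero, sub_zero] at h
      simpa only [key2] using h
    have hBmC : Tendsto (fun n => B n - C n) atTop (𝓝 0) := by
      simpa only [key1] using hAs
    have hBt : Tendsto (fun n => B n) atTop (𝓝 0) := by
      have h := ((hBC.add hBmC).const_smul ((2 : ℂ)⁻¹))
      simp only [add_zero, smul_zero] at h
      convert h using 2 with n
      have e : B n + C n + (B n - C n) = (2 : ℂ) • B n := by
        rw [two_smul]; abel
      rw [e, smul_smul, inv_mul_cancel₀ (two_ne_zero), one_smul]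
    have hCt : Tendsto (fun n => C n) atTop (𝓝 0) := by
      have := hBC.sub hBt
      simpa using this
    exact ⟨hBt, hCt⟩
  · rintro ⟨hBt, hCt⟩
    have hAs : Tendsto (fun n => A (n + 1)) atTop (𝓝 0) := by
      have := hBt.sub hCt
      simpa only [key1, sub_zero] using this
    exact (tendsto_add_atTop_iff_nat 1).mp hAs
end

section
/- Let S, T be bounded operators on a Hilbert space H with S generalized Drazin invertible with closed range. Suppose ‖S^d‖ ≤ 1 and lim_{n→∞} ‖S^{n+2} S^d S⁻ − S^{n+1} S^d‖ = 0. Then S ≤^{GD-} T (i.e., S S^{GD-} = T S^{GD-} and S^{GD-} S = S^{GD-} T) if and only if S ≤^d T (i.e., S S^d = T S^d and S^d S = S^d T). -/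
open Filter Topology

variable {H : Type*} [NormedAddCommGroup H] [InnerProductSpace ℂ H] [CompleteSpace H]

theorem stmt15 (S T Sd Si : H →L[ℂ] H)
    (hclosed : IsClosed (Set.range S))
    (hd1 : Sd * S * Sd = Sd) (hd2 : S * Sd = Sd * S)
    (hd3 : spectralRadius ℂ (S - S^2 * Sd) = 0)
    (hinner : S * Si * S = S)
    (hnorm : ‖Sd‖ ≤ 1)
    (hlim : Tendsto (fun n : ℕ => ‖S ^ (n + 2) * Sd * Si - S ^ (n + 1) * Sd‖) atTop (𝓝 0)) :
    (S * (Sd * S * Si) = T * (Sd * S * Si) ∧ (Sd * S * Si) * S = (Sd * S * Si) * T) ↔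
      (S * Sd = T * Sd ∧ Sd * S = Sd * T) := by
  have hcomm : Commute Sd S := hd2.symm
  -- (Sd * S)^n * Sd = Sd
  have hpow : ∀ n : ℕ, (Sd * S) ^ n * Sd = Sd := by
    intro n
    induction n with
    | zero => simp
    | succ n ih =>
      rw [pow_succ, mul_assoc, hd1]; exact ih
  -- Sd^n * S^n * Sd = Sd
  have hpow' : ∀ n : ℕ, Sd ^ n * S ^ n * Sd = Sd := by
    intro n
    rw [← hcomm.mul_pow, hpow]
  -- Sd^n * S^(n+m) * Sd = S^m * Sd
  have hkey : ∀ n m : ℕ, Sd ^ n * S ^ (n + m) * Sd = S ^ m * Sd := by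
    intro n m
    have hc : S ^ m * Sd = Sd * S ^ m := ((hcomm.symm).pow_left m)
    calc Sd ^ n * S ^ (n + m) * Sd
        = Sd ^ n * (S ^ n * S ^ m) * Sd := by rw [pow_add]
      _ = Sd ^ n * S ^ n * (S ^ m * Sd) := by rw [mul_assoc, mul_assoc, mul_assoc]
      _ = Sd ^ n * S ^ n * (Sd * S ^ m) := by rw [hc]
      _ = Sd ^ n * S ^ n * Sd * S ^ m := by simp only [mul_assoc]
      _ = Sd * S ^ m := by rw [hpow']
      _ = S ^ m * Sd := hc.symm
  -- the sequence is constant after multiplying by Sd^n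
  have hconst : ∀ n : ℕ, Sd ^ n * (S ^ (n + 2) * Sd * Si - S ^ (n + 1) * Sd)
      = S ^ 2 * Sd * Si - S ^ 1 * Sd := by
    intro n
    rw [mul_sub]
    congr 1
    · calc Sd ^ n * (S ^ (n + 2) * Sd * Si)
          = Sd ^ n * S ^ (n + 2) * Sd * Si := by simp only [mul_assoc]
        _ = S ^ 2 * Sd * Si := by rw [hkey n 2]
    · calc Sd ^ n * (S ^ (n + 1) * Sd)
          = Sd ^ n * S ^ (n + 1) * Sd := by rw [mul_assoc]
        _ = S ^ 1 * Sd := hkey n 1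
  have hSdn : ∀ n : ℕ, ‖Sd ^ n‖ ≤ 1 := by
    intro n
    induction n with
    | zero => rw [pow_zero]; exact ContinuousLinearMap.norm_id_le
    | succ n ih =>
      calc ‖Sd ^ (n + 1)‖ = ‖Sd ^ n * Sd‖ := by rw [pow_succ]
        _ ≤ ‖Sd ^ n‖ * ‖Sd‖ := norm_mul_le _ _
        _ ≤ 1 * 1 := by
            exact mul_le_mul ih hnorm (norm_nonneg _) zero_le_one
        _ = 1 := one_mul 1
  have hA : ∀ n : ℕ, ‖S ^ 2 * Sd * Si - S ^ 1 * Sd‖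
      ≤ ‖S ^ (n + 2) * Sd * Si - S ^ (n + 1) * Sd‖ := by
    intro n
    calc ‖S ^ 2 * Sd * Si - S ^ 1 * Sd‖
        = ‖Sd ^ n * (S ^ (n + 2) * Sd * Si - S ^ (n + 1) * Sd)‖ := by rw [hconst]
      _ ≤ ‖Sd ^ n‖ * ‖S ^ (n + 2) * Sd * Si - S ^ (n + 1) * Sd‖ := norm_mul_le _ _
      _ ≤ 1 * ‖S ^ (n + 2) * Sd * Si - S ^ (n + 1) * Sd‖ :=
          mul_le_mul_of_nonneg_right (hSdn n) (norm_nonneg _)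
      _ = _ := one_mul _
  have hA0 : ‖S ^ 2 * Sd * Si - S ^ 1 * Sd‖ ≤ 0 := ge_of_tendsto' hlim hA
  have hzero : S ^ 2 * Sd * Si - S ^ 1 * Sd = 0 :=
    norm_le_zero_iff.mp hA0
  have hkey2 : S ^ 2 * Sd * Si = S * Sd := by
    have := sub_eq_zero.mp hzero
    simpa [pow_one] using this
  -- deduce Sd * S * Si = Sd
  have hG : Sd * S * Si = Sd := by
    have h1 : Sd * (S ^ 2 * Sd * Si) = Sd * (S * Sd) := by rw [hkey2]
    have h2 : Sd * (S ^ 2 * Sd * Si) = Sd * S * Si := by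
      calc Sd * (S ^ 2 * Sd * Si)
          = Sd * (S * S) * Sd * Si := by
            rw [sq]; simp only [mul_assoc]
        _ = Sd * S * (S * Sd) * Si := by simp only [mul_assoc]
        _ = Sd * S * (Sd * S) * Si := by rw [hd2]
        _ = Sd * S * Sd * S * Si := by simp only [mul_assoc]
        _ = Sd * S * Si := by rw [hd1]
    have h3 : Sd * (S * Sd) = Sd := by rw [← mul_assoc, hd1]
    rw [h2, h3] at h1
    exact h1
  rw [hG]
end

section
/- Let T be a bounded operator on a Hilbert space H that is generalized Drazin invertible with closed range, and let T⁻ be a fixed inner inverse of T. Then X = T⁻ T T^d is the unique solution of the operator equations X T X = X, X T^d = T⁻ T^d, and T X = T T^d. -/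
open Filter Topology

variable {H : Type*} [NormedAddCommGroup H] [InnerProductSpace ℂ H] [CompleteSpace H]

theorem stmt16 (T Td Ti : H →L[ℂ] H)
    (hclosed : IsClosed (Set.range T))
    (hd1 : Td * T * Td = Td) (hd2 : T * Td = Td * T)
    (hd3 : spectralRadius ℂ (T - T^2 * Td) = 0)
    (hinner : T * Ti * T = T) :
    (let X := Ti * T * Td;
      X * T * X = X ∧ X * Td = Ti * Td ∧ T * X = T * Td) ∧
    ∀ Y : H →L[ℂ] H,
      (Y * T * Y = Y ∧ Y * Td = Ti * Td ∧ T * Y = T * Td) → Y = Ti * T * Td := by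
  have h1 : T * Td * Td = Td := by rw [hd2, hd1]
  have goal3 : T * (Ti * T * Td) = T * Td := by
    rw [← mul_assoc, ← mul_assoc, hinner]
  have goal1 : Ti * T * Td * T * (Ti * T * Td) = Ti * T * Td := by
    calc Ti * T * Td * T * (Ti * T * Td)
        = Ti * T * Td * (T * (Ti * T * Td)) := by rw [mul_assoc]
      _ = Ti * T * Td * (T * Td) := by rw [goal3]
      _ = Ti * T * (Td * (T * Td)) := by rw [mul_assoc (Ti * T)]
      _ = Ti * T * Td := by rw [← mul_assoc Td T Td, hd1]
  have goal2 : Ti * T * Td * Td = Ti * Td := by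
    rw [mul_assoc Ti T Td, mul_assoc, h1]
  refine ⟨⟨goal1, goal2, goal3⟩, ?_⟩
  rintro Y ⟨hy1, hy2, hy3⟩
  calc Y = Y * T * Y := hy1.symm
    _ = Y * (T * Y) := by rw [mul_assoc]
    _ = Y * (T * Td) := by rw [hy3]
    _ = Y * Td * T := by rw [hd2, ← mul_assoc]
    _ = Ti * Td * T := by rw [hy2]
    _ = Ti * T * Td := by rw [mul_assoc, ← hd2, ← mul_assoc]
end

section
/- Let S, T be bounded operators on a Hilbert space H with S generalized Drazin invertible with closed range, S⁻ an inner inverse of S, and S^{-GD} = S⁻ S S^d. Then (i) S^{-GD} S = S^{-GD} T if and only if S^d S = S^d T, and (ii) S S^{-GD} = T S^{-GD} if and only if S^d = T S⁻ S^d. -/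
open Filter Topology

variable {H : Type*} [NormedAddCommGroup H] [InnerProductSpace ℂ H] [CompleteSpace H]

theorem stmt17 (S T Sd Si : H →L[ℂ] H)
    (hclosed : IsClosed (Set.range S))
    (hd1 : Sd * S * Sd = Sd) (hd2 : S * Sd = Sd * S)
    (hd3 : spectralRadius ℂ (S - S^2 * Sd) = 0)
    (hinner : S * Si * S = S) :
    ((Si * S * Sd) * S = (Si * S * Sd) * T ↔ Sd * S = Sd * T) ∧
    (S * (Si * S * Sd) = T * (Si * S * Sd) ↔ Sd = T * Si * Sd) := by
  have hinner' : ∀ X : H →L[ℂ] H, S * (Si * (S * X)) = S * X := fun X => by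
    calc S * (Si * (S * X)) = (S * Si * S) * X := by noncomm_ring
      _ = S * X := by rw [hinner]
  have hd1' : ∀ X : H →L[ℂ] H, Sd * (S * (Sd * X)) = Sd * X := fun X => by
    calc Sd * (S * (Sd * X)) = (Sd * S * Sd) * X := by noncomm_ring
      _ = Sd * X := by rw [hd1]
  constructor
  · constructor
    · intro h
      have h2 : S * (Si * (S * (Sd * S))) = S * (Si * (S * (Sd * T))) := by
        calc S * (Si * (S * (Sd * S))) = S * ((Si * S * Sd) * S) := by noncomm_ring
          _ = S * ((Si * S * Sd) * T) := by rw [h]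
          _ = S * (Si * (S * (Sd * T))) := by noncomm_ring
      rw [hinner', hinner'] at h2
      have h3 := congrArg (Sd * ·) h2
      simpa [hd1'] using h3
    · intro h
      calc (Si * S * Sd) * S = Si * S * (Sd * S) := by noncomm_ring
        _ = Si * S * (Sd * T) := by rw [h]
        _ = (Si * S * Sd) * T := by noncomm_ring
  · constructor
    · intro h
      have h2 : T * (Si * (S * Sd)) = S * Sd := by
        calc T * (Si * (S * Sd)) = T * (Si * S * Sd) := by noncomm_ring
          _ = S * (Si * S * Sd) := by rw [h]
          _ = S * (Si * (S * Sd)) := by noncomm_ring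
          _ = S * Sd := hinner' Sd
      have hSd : Sd = S * Sd * Sd := by
        calc Sd = Sd * S * Sd := hd1.symm
          _ = S * Sd * Sd := by rw [hd2]
      calc Sd = S * Sd * Sd := hSd
        _ = (T * (Si * (S * Sd))) * Sd := by rw [h2]
        _ = T * Si * (S * Sd * Sd) := by noncomm_ring
        _ = T * Si * Sd := by rw [← hSd]
    · intro h
      calc S * (Si * S * Sd) = S * (Si * (S * Sd)) := by noncomm_ring
        _ = S * Sd := hinner' Sd
        _ = Sd * S := hd2
        _ = (T * Si * Sd) * S := by rw [← h]
        _ = T * (Si * (Sd * S)) := by noncomm_ring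
        _ = T * (Si * (S * Sd)) := by rw [hd2]
        _ = T * (Si * S * Sd) := by noncomm_ring
end

section
/- Let T, S be bounded operators between Hilbert spaces, T ∈ B(H, K) and S ∈ B(K, H). If the product T S is generalized Drazin invertible in B(K), then S T is generalized Drazin invertible in B(H) and (S T)^d = S ((T S)^d)² T. -/
open Filter Topology

set_option linter.unusedSectionVars false

variable {H K : Type*} [NormedAddCommGroup H] [InnerProductSpace ℂ H] [CompleteSpace H]
  [NormedAddCommGroup K] [InnerProductSpace ℂ K] [CompleteSpace K]

/-- If `z ≠ 0` and `z - u ∘ v` is invertible, then so is `z - v ∘ u`. -/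
theorem aux_unit18 (u : H →L[ℂ] K) (v : K →L[ℂ] H) {z : ℂ} (hz : z ≠ 0)
    (h : IsUnit (algebraMap ℂ (K →L[ℂ] K) z - u ∘L v)) :
    IsUnit (algebraMap ℂ (H →L[ℂ] H) z - v ∘L u) := by
  obtain ⟨w, hw1, hw2⟩ := isUnit_iff_exists.mp h
  have key1 : ∀ c : K →L[ℂ] K,
      (algebraMap ℂ (H →L[ℂ] H) z - v ∘L u) * (v ∘L c ∘L u)
        = v ∘L ((algebraMap ℂ (K →L[ℂ] K) z - u ∘L v) * c) ∘L u := by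
    intro c; ext x
    simp [ContinuousLinearMap.mul_apply, Algebra.algebraMap_eq_smul_one, map_sub, map_smul]
  have key2 : ∀ c : K →L[ℂ] K,
      (v ∘L c ∘L u) * (algebraMap ℂ (H →L[ℂ] H) z - v ∘L u)
        = v ∘L (c * (algebraMap ℂ (K →L[ℂ] K) z - u ∘L v)) ∘L u := by
    intro c; ext x
    simp [ContinuousLinearMap.mul_apply, Algebra.algebraMap_eq_smul_one, map_sub, map_smul]
  have hone : v ∘L (1 : K →L[ℂ] K) ∘L u = v ∘L u := by ext x; simp
  refine isUnit_iff_exists.mpr ⟨z⁻¹ • (1 + v ∘L w ∘L u), ?_, ?_⟩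
  · rw [mul_smul_comm, mul_add, mul_one, key1, hw1, hone, sub_add_cancel,
      Algebra.algebraMap_eq_smul_one, smul_smul, inv_mul_cancel₀ hz, one_smul]
  · rw [smul_mul_assoc, add_mul, one_mul, key2, hw2, hone, sub_add_cancel,
      Algebra.algebraMap_eq_smul_one, smul_smul, inv_mul_cancel₀ hz, one_smul]

/-- If `u ∘ v` is quasinilpotent, then so is `v ∘ u`. -/
theorem aux_rad18 (u : H →L[ℂ] K) (v : K →L[ℂ] H)
    (h : spectralRadius ℂ (u ∘L v) = 0) : spectralRadius ℂ (v ∘L u) = 0 := by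
  have hsubset : spectrum ℂ (v ∘L u) ⊆ {0} := by
    intro z hzmem
    by_contra hz
    have hz' : z ≠ 0 := hz
    have h1 : z ∉ spectrum ℂ (u ∘L v) := by
      intro hmem
      have : (‖z‖₊ : ENNReal) ≤ spectralRadius ℂ (u ∘L v) :=
        le_iSup₂ (f := fun k (_ : k ∈ spectrum ℂ (u ∘L v)) => (‖k‖₊ : ENNReal)) z hmem
      rw [h] at this
      simp only [nonpos_iff_eq_zero, ENNReal.coe_eq_zero, nnnorm_eq_zero] at this
      exact hz' this
    rw [spectrum.mem_iff, not_not] at h1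
    exact (spectrum.mem_iff.mp hzmem) (aux_unit18 u v hz' h1)
  refine le_antisymm ?_ zero_le
  refine iSup₂_le fun z hzmem => ?_
  have : z = 0 := hsubset hzmem
  simp [this]

theorem stmt18 (T : H →L[ℂ] K) (S : K →L[ℂ] H) (A : K →L[ℂ] K)
    (hd1 : A * (T ∘L S) * A = A) (hd2 : (T ∘L S) * A = A * (T ∘L S))
    (hd3 : spectralRadius ℂ ((T ∘L S) - (T ∘L S) ^ 2 * A) = 0) :
    (let B := S ∘L (A * A) ∘L T;
      B * (S ∘L T) * B = B ∧ (S ∘L T) * B = B * (S ∘L T) ∧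
      spectralRadius ℂ ((S ∘L T) - (S ∘L T) ^ 2 * B) = 0) := by
  set M := T ∘L S with hM
  have hmul : ∀ X Y : K →L[ℂ] K,
      (S ∘L X ∘L T) * (S ∘L Y ∘L T) = S ∘L (X * M * Y) ∘L T := by
    intro X Y; ext x; simp [ContinuousLinearMap.mul_apply, hM]
  have hsub : ∀ X Y : K →L[ℂ] K,
      S ∘L (X - Y) ∘L T = S ∘L X ∘L T - S ∘L Y ∘L T := by
    intro X Y; ext x; simp
  have hone : S ∘L (1 : K →L[ℂ] K) ∘L T = S ∘L T := by ext x; simp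
  have h1 : A * A * M = A := by
    calc A * A * M = A * (M * A) := by rw [mul_assoc, ← hd2]
    _ = A := by rw [← mul_assoc, hd1]
  have h2 : M * (A * A) = A := by
    calc M * (A * A) = A * M * A := by rw [← mul_assoc, hd2]
    _ = A := hd1
  refine ⟨?_, ?_, ?_⟩
  · rw [← hone, hmul, hmul]
    exact congrArg (fun X => S ∘L X ∘L T) (by
      calc A * A * M * 1 * M * (A * A) = (A * A * M) * (M * (A * A)) := by
            rw [mul_one]; noncomm_ring
      _ = A * A := by rw [h1, h2])
  · rw [← hone, hmul, hmul]
    exact congrArg (fun X => S ∘L X ∘L T) (by rw [one_mul, mul_one, h2, h1])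
  · have hsq : (S ∘L T) ^ 2 * (S ∘L (A * A) ∘L T) = S ∘L (M * A) ∘L T := by
      rw [sq, ← hone, hmul, hmul]
      exact congrArg (fun X => S ∘L X ∘L T) (by
        calc 1 * M * 1 * M * (A * A) = M * (M * (A * A)) := by noncomm_ring
        _ = M * A := by rw [h2])
    rw [hsq, ← hone, ← hsub]
    apply aux_rad18
    have e1 : ((1 - M * A) ∘L T) ∘L S = (1 - M * A) * M := by
      ext x; simp [ContinuousLinearMap.mul_apply, hM]
    rw [e1, sub_mul, one_mul]
    have e2 : M * A * M = M ^ 2 * A := by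
      rw [sq, mul_assoc, ← hd2, ← mul_assoc]
    rw [e2]
    exact hd3
end
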